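/- For any nonzero integer a divisible by 3 and any integer n ≥ 2, E_{2n,a} ≡ 2a·(3a-2)^{-1} + 9a^2 n^3 + 9a^2 n^2 - 3a^2 n (mod 3^{ord_3(n)+5}), where (3a-2)^{-1} is the inverse of 3a-2 modulo 3^{ord_3(n)+5} and ord_3(n) is the 3-adic valuation of n. -/

import Mathlib

open Finset

def EZ (a : ℤ) : ℕ → ℤ
  | 0 => 1
  | n + 1 =>
      -a * ∑ k ∈ (Finset.Icc 1 ((n + 1) / 2)).attach,
        ((n + 1).choose (2 * k.1) : ℤ) * EZ a (n + 1 - 2 * k.1)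
  decreasing_by
    have h := Finset.mem_Icc.mp k.2
    omega

lemma sum_even_helper (m : ℕ) (h : ℕ → ℤ) (hodd : ∀ i, h (2*i+1) = 0) :
    ∑ i ∈ range (2*m+1), h i = ∑ k ∈ range (m+1), h (2*k) := by
  induction m with
  | zero => simp
  | succ m ih =>
      have e1 : 2*(m+1)+1 = (2*m+1) + 1 + 1 := by ring
      rw [e1, Finset.sum_range_succ, Finset.sum_range_succ, ih, Finset.sum_range_succ]
      have e2 : 2*m+1+1 = 2*(m+1) := by ring
      rw [hodd m, e2, Finset.sum_range_succ, Finset.sum_range_succ]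
      ring

lemma bin_even (m : ℕ) (x : ℤ) :
    (x+1)^(2*m) + (x-1)^(2*m) = 2 * ∑ k ∈ range (m+1), (((2*m).choose (2*k) : ℕ) : ℤ) * x^(2*k) := by
  have h1 : (x+1)^(2*m) = ∑ i ∈ range (2*m+1), x^i * 1^(2*m-i) * ((2*m).choose i : ℤ) := by
    exact_mod_cast add_pow x 1 (2*m)
  have h2 : (x-1)^(2*m) = ∑ i ∈ range (2*m+1), x^i * (-1:ℤ)^(2*m-i) * ((2*m).choose i : ℤ) := by
    have := add_pow x (-1 : ℤ) (2*m)
    rw [← this]; ring_nf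
  rw [h1, h2, ← Finset.sum_add_distrib]
  have key : ∀ i ∈ range (2*m+1),
      x^i * 1^(2*m-i) * ((2*m).choose i : ℤ) + x^i * (-1:ℤ)^(2*m-i) * ((2*m).choose i : ℤ)
      = (fun i => (1 + (-1:ℤ)^(2*m-i)) * x^i * ((2*m).choose i : ℤ)) i := by
    intro i _; simp; ring
  rw [Finset.sum_congr rfl key]
  rw [sum_even_helper m _ (by
    intro i
    rcases le_or_gt (2*i+1) (2*m) with h | h
    · have hodd : Odd (2*m - (2*i+1)) :=
        Nat.Even.sub_odd h ⟨m, by ring⟩ ⟨i, rfl⟩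
      rw [hodd.neg_one_pow]; ring
    · have : (2*m).choose (2*i+1) = 0 := Nat.choose_eq_zero_of_lt h
      rw [this]; push_cast; ring)]
  rw [Finset.mul_sum]
  refine Finset.sum_congr rfl ?_
  intro k _
  have : (-1:ℤ)^(2*m-2*k) = 1 := by
    have : 2*m-2*k = 2*(m-k) := by omega
    rw [this, pow_mul]; norm_num
  rw [this]; ring

lemma Sval (m' : ℕ) (x : ℤ) :
    2 * ∑ k ∈ Icc 1 m', (((2*(m'+1)).choose (2*k) : ℕ):ℤ) * x^(2*((m'+1)-k))
    = (x+1)^(2*(m'+1)) + (x-1)^(2*(m'+1)) - 2*x^(2*(m'+1)) - 2 := by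
  rw [bin_even (m'+1) x]
  -- split off k = 0 and k = m'+1 from range (m'+2)
  have h1 : ∑ k ∈ range (m'+1+1), (((2*(m'+1)).choose (2*k) : ℕ):ℤ) * x^(2*k)
      = (∑ k ∈ range (m'+1), (((2*(m'+1)).choose (2*k) : ℕ):ℤ) * x^(2*k))
        + x^(2*(m'+1)) := by
    rw [Finset.sum_range_succ, Nat.choose_self]; push_cast; ring
  have h2 : ∑ k ∈ range (m'+1), (((2*(m'+1)).choose (2*k) : ℕ):ℤ) * x^(2*k)
      = (∑ k ∈ range m', (((2*(m'+1)).choose (2*(k+1)) : ℕ):ℤ) * x^(2*(k+1))) + 1 := by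
    rw [Finset.sum_range_succ']
    norm_num
  have h3 : ∑ k ∈ Icc 1 m', (((2*(m'+1)).choose (2*k) : ℕ):ℤ) * x^(2*((m'+1)-k))
      = ∑ k ∈ range m', (((2*(m'+1)).choose (2*(k+1)) : ℕ):ℤ) * x^(2*(k+1)) := by
    -- reindex k ↦ m'+1-k on Icc 1 m', then to range
    have hsym : ∀ k ∈ Icc 1 m', (((2*(m'+1)).choose (2*k) : ℕ):ℤ) * x^(2*((m'+1)-k))
        = (((2*(m'+1)).choose (2*((m'+1)-k)) : ℕ):ℤ) * x^(2*((m'+1)-k)) := by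
      intro k hk
      simp only [Finset.mem_Icc] at hk
      have : (2*(m'+1)).choose (2*((m'+1)-k)) = (2*(m'+1)).choose (2*k) := by
        have he : 2*((m'+1)-k) = 2*(m'+1) - 2*k := by omega
        rw [he, Nat.choose_symm (by omega)]
      rw [this]
    rw [Finset.sum_congr rfl hsym]
    refine Finset.sum_nbij' (fun k => (m'+1-k) - 1) (fun k => m'-k) ?_ ?_ ?_ ?_ ?_
    · intro k hk; simp only [Finset.mem_Icc] at hk; simp only [Finset.mem_range]; omega
    · intro k hk; simp only [Finset.mem_range] at hk; simp only [Finset.mem_Icc]; omega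
    · intro k hk; simp only [Finset.mem_Icc] at hk; show m' - (m'+1-k-1) = k; omega
    · intro k hk; simp only [Finset.mem_range] at hk; show m'+1-(m'-k)-1 = k; omega
    · intro k hk
      simp only [Finset.mem_Icc] at hk
      have e : (m'+1-k) - 1 + 1 = m'+1-k := by omega
      rw [e]
  rw [h1, h2, ← h3]
  ring

lemma EZ_even (a : ℤ) (m : ℕ) (hm : 1 ≤ m) :
    EZ a (2*m) = -a * ∑ k ∈ Icc 1 m, (((2*m).choose (2*k) : ℕ) : ℤ) * EZ a (2*m - 2*k) := by
  obtain ⟨m', rfl⟩ : ∃ m', m = m'+1 := ⟨m-1, by omega⟩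
  have h2 : 2*(m'+1) = (2*m'+1)+1 := by ring
  rw [h2, EZ]
  congr 1
  have hdiv : (2*m'+1+1)/2 = m'+1 := by omega
  rw [hdiv]
  rw [Finset.sum_attach (Finset.Icc 1 (m'+1))
    (fun k => (((2*m'+1+1).choose (2*k) : ℕ) : ℤ) * EZ a (2*m'+1+1 - 2*k))]


def Tz (z : ℤ) (L : ℕ) (m : ℕ) : ℤ := ∑ i ∈ range L, z^i * ((i:ℤ)+1)^(2*m)


lemma shiftP1 (z : ℤ) (L e : ℕ) :
    z * ∑ i ∈ range L, z^i * ((i:ℤ)+2)^e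
    = (∑ i ∈ range L, z^i*((i:ℤ)+1)^e) - 1 + z^L*((L:ℤ)+1)^e := by
  have s2 := Finset.sum_range_succ' (fun i => z^i * ((i:ℤ)+1)^e) L
  have s3 := Finset.sum_range_succ (fun i => z^i * ((i:ℤ)+1)^e) L
  push_cast at s2 s3
  norm_num at s2 s3
  have s1 : z * ∑ i ∈ range L, z^i * ((i:ℤ)+2)^e
      = ∑ i ∈ range L, z^(i+1) * (((i:ℕ):ℤ)+1+1)^e := by
    rw [Finset.mul_sum]
    refine Finset.sum_congr rfl ?_
    intro i _
    ring
  linear_combination s1 - s2 + s3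

lemma shiftP2 (z : ℤ) (L e : ℕ) (hL : 1 ≤ L) (he : 1 ≤ e) :
    ∑ i ∈ range L, z^i * ((i:ℤ))^e
    = z * (∑ i ∈ range L, z^i * ((i:ℤ)+1)^e) - z^L * (L:ℤ)^e := by
  obtain ⟨L', rfl⟩ : ∃ L', L = L'+1 := ⟨L-1, by omega⟩
  have s2 := Finset.sum_range_succ' (fun i => z^i * ((i:ℤ))^e) L'
  have s3 := Finset.sum_range_succ (fun i => z^i * ((i:ℤ)+1)^e) L'
  push_cast at s2 s3
  have hz0 : ((0:ℤ))^e = 0 := zero_pow (by omega)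
  rw [hz0] at s2
  norm_num at s2
  have s4 : ∑ i ∈ range L', z^(i+1) * (((i:ℕ):ℤ)+1)^e
      = z * ∑ i ∈ range L', z^(i) * (((i:ℕ):ℤ)+1)^e := by
    rw [Finset.mul_sum]
    refine Finset.sum_congr rfl ?_
    intro i _
    ring
  rw [s2, s4, s3]
  push_cast
  ring

lemma lemA (a z : ℤ) (N : ℕ) (hN : 1 ≤ N) (hz : (3:ℤ) ∣ z)
    (hq : (3:ℤ)^N ∣ (a*z^2 - 2*(a-1)*z + a)) :
    ∀ m : ℕ, 1 ≤ m → (3:ℤ)^N ∣ ((1+z) * EZ a (2*m) - 2*(1-z)*z*Tz z (3*N) m) := by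
  intro m
  induction m using Nat.strong_induction_on with
  | _ m ih =>
    intro hm
    obtain ⟨m', rfl⟩ : ∃ m', m = m'+1 := ⟨m-1, by omega⟩
    set L := 3*N with hL
    have hL1 : 1 ≤ L := by omega
    -- notation
    set T : ℤ := Tz z L (m'+1) with hT
    set SC : ℤ := ∑ k ∈ Icc 1 m', (((2*(m'+1)).choose (2*k) : ℕ):ℤ) * ((1+z) * EZ a (2*((m'+1)-k))) with hSC
    set X : ℤ := ∑ k ∈ Icc 1 m', (((2*(m'+1)).choose (2*k) : ℕ):ℤ) * Tz z L ((m'+1)-k) with hX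
    set P1 : ℤ := ∑ i ∈ range L, z^i * ((i:ℤ)+2)^(2*(m'+1)) with hP1d
    set P2 : ℤ := ∑ i ∈ range L, z^i * ((i:ℤ))^(2*(m'+1)) with hP2d
    set G : ℤ := ∑ i ∈ range L, z^i with hGd
    -- recurrence
    have h_rec : (1+z) * EZ a (2*(m'+1)) = -a * (SC + (1+z)) := by
      rw [EZ_even a (m'+1) (by omega)]
      rw [Finset.sum_Icc_succ_top (by omega : 1 ≤ m'+1)]
      have hend : (((2*(m'+1)).choose (2*(m'+1)) : ℕ):ℤ) * EZ a (2*(m'+1) - 2*(m'+1)) = 1 := by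
        rw [Nat.choose_self]
        have h0 : 2*(m'+1) - 2*(m'+1) = 0 := by omega
        rw [h0]
        have : EZ a 0 = 1 := by rw [EZ]
        rw [this]; norm_num
      rw [hend]
      have hdist : (1+z) * (∑ k ∈ Icc 1 m', (((2*(m'+1)).choose (2*k) : ℕ):ℤ) * EZ a (2*(m'+1) - 2*k)) = SC := by
        rw [hSC, Finset.mul_sum]
        refine Finset.sum_congr rfl ?_
        intro k hk
        simp only [Finset.mem_Icc] at hk
        rw [show 2*(m'+1) - 2*k = 2*((m'+1)-k) from by omega]
        ring
      linear_combination (-a) * hdist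
    -- induction hypothesis applied to the sum
    have hIH : (3:ℤ)^N ∣ (SC - 2*(1-z)*z*X) := by
      have hsplit : SC - 2*(1-z)*z*X
          = ∑ k ∈ Icc 1 m', (((2*(m'+1)).choose (2*k) : ℕ):ℤ)
              * ((1+z) * EZ a (2*((m'+1)-k)) - 2*(1-z)*z*Tz z L ((m'+1)-k)) := by
        rw [hSC, hX, Finset.mul_sum, ← Finset.sum_sub_distrib]
        refine Finset.sum_congr rfl ?_
        intro k hk; ring
      rw [hsplit]
      refine Finset.dvd_sum ?_
      intro k hk
      simp only [Finset.mem_Icc] at hk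
      exact Dvd.dvd.mul_left (ih ((m'+1)-k) (by omega) (by omega)) _
    -- the umbral sum identity
    have hX2 : 2*X = P1 + P2 - 2*T - 2*G := by
      have hswap : X = ∑ i ∈ range L, z^i *
          (∑ k ∈ Icc 1 m', (((2*(m'+1)).choose (2*k) : ℕ):ℤ) * ((i:ℤ)+1)^(2*((m'+1)-k))) := by
        rw [hX]
        simp only [Tz, Finset.mul_sum]
        rw [Finset.sum_comm]
        refine Finset.sum_congr rfl ?_
        intro i _
        refine Finset.sum_congr rfl ?_
        intro k _
        ring
      have : 2*X = ∑ i ∈ range L, z^i *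
          ((((i:ℤ)+1)+1)^(2*(m'+1)) + (((i:ℤ)+1)-1)^(2*(m'+1)) - 2*((i:ℤ)+1)^(2*(m'+1)) - 2) := by
        rw [hswap, Finset.mul_sum]
        refine Finset.sum_congr rfl ?_
        intro i _
        rw [show (2:ℤ) * (z^i * (∑ k ∈ Icc 1 m', (((2*(m'+1)).choose (2*k) : ℕ):ℤ) * ((i:ℤ)+1)^(2*((m'+1)-k))))
            = z^i * (2 * ∑ k ∈ Icc 1 m', (((2*(m'+1)).choose (2*k) : ℕ):ℤ) * ((i:ℤ)+1)^(2*((m'+1)-k))) from by ring]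
        rw [Sval m' ((i:ℤ)+1)]
      rw [this, hP1d, hP2d, hT, hGd]
      simp only [Tz, Finset.mul_sum, ← Finset.sum_add_distrib, ← Finset.sum_sub_distrib]
      exact Finset.sum_congr rfl (fun i _ => by ring)
    -- shift identities
    have hP1 : z*P1 = T - 1 + z^L * ((L:ℤ)+1)^(2*(m'+1)) := by
      rw [hP1d, hT]; simp only [Tz]
      exact shiftP1 z L (2*(m'+1))
    have hP2 : P2 = z*T - z^L * ((L:ℤ))^(2*(m'+1)) := by
      rw [hP2d, hT]; simp only [Tz]
      exact shiftP2 z L (2*(m'+1)) (by omega) (by omega)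
    have hG : G * (z-1) = z^L - 1 := by
      rw [hGd]
      exact geom_sum_mul z L
    -- the key algebraic identity
    have key : (1+z) * EZ a (2*(m'+1)) - 2*(1-z)*z*T
        = -a*(SC - 2*(1-z)*z*X) - T*(1-z)*(a*z^2 - 2*(a-1)*z + a)
          - a*(z^L * ((1-z)*(((L:ℤ)+1)^(2*(m'+1)) - z*((L:ℤ))^(2*(m'+1))) + 2*z)) := by
      linear_combination h_rec - (a*(1-z)*z)*hX2 - (a*(1-z))*hP1 - (a*(1-z)*z)*hP2 - (2*a*z)*hG
    rw [key]
    have hzL : (3:ℤ)^N ∣ z^L := by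
      calc (3:ℤ)^N ∣ (3:ℤ)^L := pow_dvd_pow 3 (by omega)
        _ ∣ z^L := pow_dvd_pow_of_dvd hz L
    refine dvd_sub (dvd_sub ?_ ?_) ?_
    · exact Dvd.dvd.mul_left hIH (-a)
    · exact Dvd.dvd.mul_left hq (T*(1-z))
    · exact Dvd.dvd.mul_left (Dvd.dvd.mul_right hzL _) a

def Yp (c : ℤ) : ℤ := 364 + 363*c + 450*c^2 + 432*c^3 + 486*c^4

lemma hensel_base (c : ℤ) : 9*c^2*(Yp c)^2 - 2*(3*c-1)*(Yp c) + 1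
    = 729 * (1 - 2*c + 1634*c^2 + 3260*c^3 + 5669*c^4 + 7912*c^5 + 10740*c^6
        + 9156*c^7 + 7704*c^8 + 5184*c^9 + 2916*c^10) := by
  unfold Yp; ring

lemma hensel (c : ℤ) (k : ℕ) : ∃ y w : ℤ, y = Yp c + 729*w ∧
    (3:ℤ)^(k+6) ∣ (9*c^2*y^2 - 2*(3*c-1)*y + 1) := by
  induction k with
  | zero =>
      refine ⟨Yp c, 0, by ring, ?_⟩
      rw [hensel_base c]
      exact Dvd.dvd.mul_right (by norm_num) _
  | succ k ih =>
      obtain ⟨y, w, hy, hd⟩ := ih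
      set g : ℤ := 9*c^2*y^2 - 2*(3*c-1)*y + 1 with hg
      have h729 : (729:ℤ) ∣ g := by
        refine dvd_trans ?_ hd
        have : (729:ℤ) = 3^6 := by norm_num
        rw [this]
        exact pow_dvd_pow 3 (by omega)
      obtain ⟨s, hs⟩ := h729
      refine ⟨y + g, w + s, by rw [hy, hs]; ring, ?_⟩
      have hiden : 9*c^2*(y+g)^2 - 2*(3*c-1)*(y+g) + 1
          = g * (3 - 6*c + 18*c^2*y + 9*c^2*g) := by rw [hg]; ring
      rw [hiden]
      have h3 : (3:ℤ) ∣ (3 - 6*c + 18*c^2*y + 9*c^2*g) := ⟨1 - 2*c + 6*c^2*y + 3*c^2*g, by ring⟩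
      calc (3:ℤ)^(k+1+6) = 3^(k+6) * 3 := by ring
        _ ∣ g * (3 - 6*c + 18*c^2*y + 9*c^2*g) := mul_dvd_mul hd h3

lemma dId1eq (c w : ℤ) :
    6*(3*c*(Yp c + 729*w))^2 - 6*(3*c*(Yp c + 729*w))^3 - 135*c^2 - 135*c^2*(3*c*(Yp c + 729*w))
    = 243 * ((29443)*c^2 + (117936)*c^2*w^1 + (118098)*c^2*w^2 + (-32094244)*c^3 + (-193062771)*c^3*w^1 + (-386889048)*c^3*w^2 + (-258280326)*c^3*w^3 + (-96090619)*c^4 + (-385151112)*c^4*w^1 + (-385826166)*c^4*w^2 + (-215032494)*c^5 + (-669620034)*c^5*w^1 + (-478296900)*c^5*w^2 + (-384009642)*c^6 + (-934706304)*c^6*w^1 + (-459165024)*c^6*w^2 + (-622958310)*c^7 + (-1268372520)*c^7*w^1 + (-516560652)*c^7*w^2 + (-800635752)*c^8 + (-1081305288)*c^8*w^1 + (-925294428)*c^9 + (-909826992)*c^9*w^1 + (-933639048)*c^10 + (-612220032)*c^10*w^1 + (-841592592)*c^11 + (-344373768)*c^11*w^1 + (-603139608)*c^12 + (-393974928)*c^13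 + (-204073344)*c^14 + (-76527504)*c^15) := by unfold Yp; ring

lemma dId2eq (c w : ℤ) :
    18*(3*c*(Yp c + 729*w))^2 - 18*(3*c*(Yp c + 729*w))^3 - 648*c^2 - 648*c^2*(3*c*(Yp c + 729*w))
    = 243 * ((88328)*c^2 + (353808)*c^2*w^1 + (354294)*c^2*w^2 + (-96283824)*c^3 + (-579190500)*c^3*w^1 + (-1160667144)*c^3*w^2 + (-774840978)*c^3*w^3 + (-288272946)*c^4 + (-1155453336)*c^4*w^1 + (-1157478498)*c^4*w^2 + (-645098832)*c^5 + (-2008860102)*c^5*w^1 + (-1434890700)*c^5*w^2 + (-1152030222)*c^6 + (-2804118912)*c^6*w^1 + (-1377495072)*c^6*w^2 + (-1868876388)*c^7 + (-3805117560)*c^7*w^1 + (-1549681956)*c^7*w^2 + (-2401907256)*c^8 + (-3243915864)*c^8*w^1 + (-2775883284)*c^9 + (-2729480976)*c^9*w^1 + (-2800917144)*c^10 + (-1836660096)*c^10*w^1 + (-2524777776)*c^11 + (-1033121304)*c^11*w^1 + (-1809418824)*c^12 + (-1181924784)*c^13 + (-612220032)*c^14 + (-229582512)*c^15) := by unfold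 Yp; ring

lemma dId3eq (c w : ℤ) :
    54*(3*c*(Yp c + 729*w))^2 - 54*(3*c*(Yp c + 729*w))^3 - 486*c^2 - 486*c^2*(3*c*(Yp c + 729*w))
    = 729 * ((88330)*c^2 + (353808)*c^2*w^1 + (354294)*c^2*w^2 + (-96281640)*c^3 + (-579186126)*c^3*w^1 + (-1160667144)*c^3*w^2 + (-774840978)*c^3*w^3 + (-288270768)*c^4 + (-1155453336)*c^4*w^1 + (-1157478498)*c^4*w^2 + (-645096132)*c^5 + (-2008860102)*c^5*w^1 + (-1434890700)*c^5*w^2 + (-1152027630)*c^6 + (-2804118912)*c^6*w^1 + (-1377495072)*c^6*w^2 + (-1868873472)*c^7 + (-3805117560)*c^7*w^1 + (-1549681956)*c^7*w^2 + (-2401907256)*c^8 + (-3243915864)*c^8*w^1 + (-2775883284)*c^9 + (-2729480976)*c^9*w^1 + (-2800917144)*c^10 + (-1836660096)*c^10*w^1 + (-2524777776)*c^11 + (-1033121304)*c^11*w^1 + (-1809418824)*c^12 + (-1181924784)*c^13 + (-612220032)*c^14 + (-229582512)*c^15) := by unfold Yp; ring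


lemma dId1 (c w : ℤ) : ∃ u : ℤ,
    6*(3*c*(Yp c + 729*w))^2 - 6*(3*c*(Yp c + 729*w))^3 - 135*c^2 - 135*c^2*(3*c*(Yp c + 729*w))
    = 243 * u := ⟨_, dId1eq c w⟩
lemma dId2 (c w : ℤ) : ∃ u : ℤ,
    18*(3*c*(Yp c + 729*w))^2 - 18*(3*c*(Yp c + 729*w))^3 - 648*c^2 - 648*c^2*(3*c*(Yp c + 729*w))
    = 243 * u := ⟨_, dId2eq c w⟩
lemma dId3 (c w : ℤ) : ∃ u : ℤ,
    54*(3*c*(Yp c + 729*w))^2 - 54*(3*c*(Yp c + 729*w))^3 - 486*c^2 - 486*c^2*(3*c*(Yp c + 729*w))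
    = 729 * u := ⟨_, dId3eq c w⟩

lemma pow3_ge (d : ℕ) (hd : 2 ≤ d) : d + 5 ≤ 3^d := by
  induction d with
  | zero => omega
  | succ d ih =>
      rcases Nat.lt_or_ge d 2 with h | h
      · interval_cases d <;> simp_all <;> omega
      · have := ih h
        have h3 : 3^(d+1) = 3 * 3^d := by ring
        omega

lemma pow3_ge2 (v : ℕ) (hv : 1 ≤ v) : v + 5 ≤ 2 * 3^v := by
  induction v with
  | zero => omega
  | succ v ih =>
      rcases Nat.lt_or_ge v 1 with h | h
      · interval_cases v <;> norm_num
      · have := ih h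
        have h3 : 3^(v+1) = 3 * 3^v := by ring
        omega

lemma tri (t : ℕ) (h : ¬ (3 ∣ t)) : (3:ℤ) ∣ ((t:ℤ)^2 - 1) := by
  have h2 : t % 3 = 1 ∨ t % 3 = 2 := by omega
  rcases h2 with h2 | h2
  · obtain ⟨k, hk⟩ : ∃ k, t = 3*k+1 := ⟨t/3, by omega⟩
    subst hk; push_cast
    exact ⟨3*k^2+2*k, by ring⟩
  · obtain ⟨k, hk⟩ : ∃ k, t = 3*k+2 := ⟨t/3, by omega⟩
    subst hk; push_cast
    exact ⟨3*k^2+4*k+1, by ring⟩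

lemma choose_tail (n j v : ℕ) (hj : 5 ≤ j) (hn : 1 ≤ n) (hv3 : 3^v ∣ n) (x : ℤ) (hx : (3:ℤ) ∣ x) :
    (3:ℤ)^(v+5) ∣ (n.choose j : ℤ) * x^j := by
  rcases Nat.lt_or_ge n j with h | h
  · rw [Nat.choose_eq_zero_of_lt h]; simp
  -- d := padicValNat 3 j
  set d := padicValNat 3 j with hd
  have hj0 : j ≠ 0 := by omega
  have hdvd3d : 3^d ∣ j := pow_padicValNat_dvd
  have hjd5 : d + 5 ≤ j := by
    rcases Nat.lt_or_ge d 2 with hd2 | hd2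
    · interval_cases d
      · omega
      · have h3j : 3 ∣ j := by
          have : (3:ℕ)^1 = 3 := by norm_num
          rw [← this]; exact hdvd3d
        omega
    · have h1 : 3^d ≤ j := Nat.le_of_dvd (by omega) hdvd3d
      have := pow3_ge d hd2
      omega
  rcases Nat.lt_or_ge d v with hcase | hcase
  · -- 3^(v-d) ∣ choose, 3^(d+5) ∣ x^j
    have hkey : 3^v ∣ n.choose j * j := by
      have hident : n * (n-1).choose (j-1) = n.choose j * j := by
        have := Nat.add_one_mul_choose_eq (n-1) (j-1)
        have e1 : n-1+1 = n := by omega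
        have e2 : j-1+1 = j := by omega
        rw [e1, e2] at this
        omega
      exact hident ▸ Dvd.dvd.mul_right hv3 _
    set e := j / 3^d with he
    have hje : j = 3^d * e := (Nat.ordProj_mul_ordCompl_eq_self j 3).symm
    have hne : ¬ (3 ∣ e) := Nat.not_dvd_ordCompl (by norm_num) hj0
    have hcop : Nat.Coprime (3^v) e := Nat.Coprime.pow_left v
      ((Nat.Prime.coprime_iff_not_dvd (by norm_num)).mpr hne)
    have hkey2 : 3^v ∣ n.choose j * 3^d := by
      refine Nat.Coprime.dvd_of_dvd_mul_right hcop ?_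
      have : n.choose j * 3^d * e = n.choose j * j := by rw [hje]; ring
      rw [this]; exact hkey
    have hC : 3^(v-d) ∣ n.choose j := by
      have hsplit : (3:ℕ)^v = 3^(v-d) * 3^d := by
        rw [← pow_add]
        congr 1
        omega
      rw [hsplit] at hkey2
      exact (Nat.mul_dvd_mul_iff_right (Nat.pow_pos (n := d) (by norm_num))).mp hkey2
    have hCZ : (3:ℤ)^(v-d) ∣ (n.choose j : ℤ) := by
      have := Int.natCast_dvd_natCast.mpr hC
      push_cast at this
      exact this
    have hXZ : (3:ℤ)^(d+5) ∣ x^j := by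
      calc (3:ℤ)^(d+5) ∣ x^(d+5) := pow_dvd_pow_of_dvd hx _
        _ ∣ x^j := pow_dvd_pow x hjd5
    have hsplit2 : (3:ℤ)^(v+5) = 3^(v-d) * 3^(d+5) := by
      rw [← pow_add]
      congr 1
      omega
    rw [hsplit2]
    exact mul_dvd_mul hCZ hXZ
  · -- d ≥ v : 3^(v+5) ∣ 3^j ∣ x^j
    have h1 : v + 5 ≤ j := by omega
    have h2 : (3:ℤ)^(v+5) ∣ (3:ℤ)^j := pow_dvd_pow 3 h1
    have h3 : (3:ℤ)^j ∣ x^j := pow_dvd_pow_of_dvd hx j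
    exact Dvd.dvd.mul_left (dvd_trans h2 h3) _

lemma geo3 (z : ℤ) (K : ℕ) :
    ∑ i ∈ range (3*K), z^i = (1+z+z^2) * ∑ i ∈ range K, (z^3)^i := by
  induction K with
  | zero => simp
  | succ K ih =>
      have e : 3*(K+1) = (3*K)+1+1+1 := by ring
      rw [e, Finset.sum_range_succ, Finset.sum_range_succ, Finset.sum_range_succ,
        Finset.sum_range_succ, ih]
      ring

lemma filter_mult3 (K : ℕ) (f : ℕ → ℤ) :
    ∑ i ∈ (range (3*K)).filter (fun i => 3 ∣ (i+1)), f i = ∑ s ∈ range K, f (3*s+2) := by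
  refine (Finset.sum_nbij' (fun i => i / 3) (fun s => 3*s+2) ?_ ?_ ?_ ?_ ?_).symm.symm
  · intro i hi
    simp only [Finset.mem_filter, Finset.mem_range] at hi
    simp only [Finset.mem_range]
    show i / 3 < K
    omega
  · intro s hs
    simp only [Finset.mem_range] at hs
    simp only [Finset.mem_filter, Finset.mem_range]
    omega
  · intro i hi
    simp only [Finset.mem_filter, Finset.mem_range] at hi
    show 3 * (i/3) + 2 = i
    omega
  · intro s hs
    simp only [Finset.mem_range] at hs
    show (3*s+2)/3 = s
    omega
  · intro i hi
    simp only [Finset.mem_filter, Finset.mem_range] at hi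
    have he : 3 * (i / 3) + 2 = i := by omega
    simp only [he]

lemma theta0_eq (z : ℤ) (K : ℕ) :
    ∑ i ∈ (range (3*K)).filter (fun i => ¬ (3 ∣ (i+1))), z^i
    = (1+z) * ∑ s ∈ range K, (z^3)^s := by
  have hsplit := Finset.sum_filter_add_sum_filter_not (range (3*K)) (fun i => 3 ∣ (i+1)) (fun i => z^i)
  have h1 := filter_mult3 K (fun i => z^i)
  have h2 : ∑ s ∈ range K, z^(3*s+2) = z^2 * ∑ s ∈ range K, (z^3)^s := by
    rw [Finset.mul_sum]
    refine Finset.sum_congr rfl ?_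
    intro s _
    rw [← pow_mul]
    rw [show 3*s+2 = 2 + s*3 from by ring, pow_add]
    ring
  have h3 := geo3 z K
  linear_combination hsplit - h1 - h2 + h3

lemma chooseI2 (n : ℕ) : ((n.choose 2 : ℕ) : ℤ) * 2 = (n:ℤ) * ((n:ℤ)-1) := by
  induction n with
  | zero => simp
  | succ n ih =>
      rw [Nat.choose_succ_succ]
      push_cast
      push_cast at ih
      rw [Nat.choose_one_right] at *
      push_cast
      linarith [ih]

lemma chooseI3 (n : ℕ) : ((n.choose 3 : ℕ) : ℤ) * 6 = (n:ℤ) * ((n:ℤ)-1) * ((n:ℤ)-2) := by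
  induction n with
  | zero => simp
  | succ n ih =>
      rw [Nat.choose_succ_succ]
      push_cast
      have h2 := chooseI2 n
      linarith [ih, h2]

lemma chooseI4 (n : ℕ) : ((n.choose 4 : ℕ) : ℤ) * 24 = (n:ℤ) * ((n:ℤ)-1) * ((n:ℤ)-2) * ((n:ℤ)-3) := by
  induction n with
  | zero => simp
  | succ n ih =>
      rw [Nat.choose_succ_succ]
      push_cast
      have h3 := chooseI3 n
      linarith [ih, h3]

lemma lemB (a c y w z : ℤ) (n N : ℕ)
    (ha : a = 3*c) (hy : y = Yp c + 729*w) (hz : z = a*y)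
    (hn3 : 3 ≤ n) (hN : N = padicValNat 3 n + 5)
    (hq6 : (3:ℤ)^N ∣ (9*c^2*y^2 - 2*(3*c-1)*y + 1)) :
    (3:ℤ)^N ∣ ((3*a-2) * (2*(1-z)*z*Tz z (3*N) n)
      - (1+z)*(2*a + (3*a-2)*(9*a^2*(n:ℤ)^3 + 9*a^2*(n:ℤ)^2 - 3*a^2*(n:ℤ)))) := by
  set v := padicValNat 3 n with hv
  have hN5 : N = v + 5 := hN
  have hzc : z = 3*c*(Yp c + 729*w) := by rw [hz, ha, hy]
  have hz3 : (3:ℤ) ∣ z := ⟨c*y, by rw [hz, ha]; ring⟩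
  have hQ : (3:ℤ)^N ∣ (a*z^2 - 2*(a-1)*z + a) := by
    have he : a*z^2 - 2*(a-1)*z + a = a*(9*c^2*y^2 - 2*(3*c-1)*y + 1) := by
      rw [hz, ha]; ring
    rw [he]
    exact Dvd.dvd.mul_left hq6 a
  have hvn : (3:ℤ)^v ∣ (n:ℤ) := by
    have h := pow_padicValNat_dvd (p := 3) (n := n)
    exact_mod_cast Int.natCast_dvd_natCast.mpr h
  have h2n : N ≤ 2*n := by
    have h3v : (3:ℕ)^v ∣ n := pow_padicValNat_dvd
    have hle : 3^v ≤ n := Nat.le_of_dvd (by omega) h3v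
    rcases Nat.eq_zero_or_pos v with h0 | h1
    · omega
    · have := pow3_ge2 v h1; omega
  -- split T
  set A : Finset ℕ := (range (3*N)).filter (fun i => ¬ (3 ∣ (i+1))) with hA
  set SA : ℤ := ∑ i ∈ A, z^i * ((i:ℤ)+1)^(2*n) with hSA
  set SB : ℤ := ∑ i ∈ (range (3*N)).filter (fun i => 3 ∣ (i+1)), z^i * ((i:ℤ)+1)^(2*n) with hSB
  have hTsplit : Tz z (3*N) n = SB + SA := by
    rw [hSA, hSB, hA]
    simp only [Tz]
    exact (Finset.sum_filter_add_sum_filter_not (range (3*N)) (fun i => 3 ∣ (i+1)) _).symm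
  have hB0 : (3:ℤ)^N ∣ SB := by
    rw [hSB]
    refine Finset.dvd_sum ?_
    intro i hi
    simp only [Finset.mem_filter, Finset.mem_range] at hi
    have h3i : (3:ℤ) ∣ ((i:ℤ)+1) := by exact_mod_cast Int.natCast_dvd_natCast.mpr hi.2
    have hp : (3:ℤ)^(2*n) ∣ ((i:ℤ)+1)^(2*n) := pow_dvd_pow_of_dvd h3i _
    exact Dvd.dvd.mul_left (dvd_trans (pow_dvd_pow 3 h2n) hp) _
  -- thetas
  set th : ℕ → ℤ := fun j => ∑ i ∈ A, z^i * (((i:ℤ)+1)^2-1)^j with hth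
  have hAexp : SA = ∑ j ∈ range (n+1), ((n.choose j : ℕ):ℤ) * th j := by
    rw [hSA]
    have hpt : ∀ i ∈ A, z^i * ((i:ℤ)+1)^(2*n)
        = ∑ j ∈ range (n+1), ((n.choose j : ℕ):ℤ) * (z^i * (((i:ℤ)+1)^2-1)^j) := by
      intro i _
      have hb : ((i:ℤ)+1)^(2*n) = ∑ j ∈ range (n+1),
          (((i:ℤ)+1)^2-1)^j * 1^(n-j) * ((n.choose j : ℕ):ℤ) := by
        have e1 : ((i:ℤ)+1)^(2*n) = (((i:ℤ)+1)^2)^n := by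
          rw [← pow_mul]
        have e2 : (((i:ℤ)+1)^2)^n = ((((i:ℤ)+1)^2-1) + 1)^n := by norm_num
        rw [e1, e2]
        exact add_pow (((i:ℤ)+1)^2-1) 1 n
      rw [hb, Finset.mul_sum]
      refine Finset.sum_congr rfl ?_
      intro j _
      rw [one_pow]
      ring
    rw [Finset.sum_congr rfl hpt, Finset.sum_comm]
    refine Finset.sum_congr rfl ?_
    intro j _
    rw [hth]
    simp only []
    rw [Finset.mul_sum]
  have htail : ∀ j, 5 ≤ j → (3:ℤ)^N ∣ ((n.choose j : ℕ):ℤ) * th j := by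
    intro j hj
    rw [hth]
    simp only []
    rw [Finset.mul_sum]
    refine Finset.dvd_sum ?_
    intro i hi
    rw [hA] at hi
    simp only [Finset.mem_filter, Finset.mem_range] at hi
    have h3x : (3:ℤ) ∣ (((i:ℤ)+1)^2-1) := by
      have := tri (i+1) hi.2
      push_cast at this
      exact this
    have hct := choose_tail n j v hj (by omega) pow_padicValNat_dvd _ h3x
    rw [hN5]
    have e : ((n.choose j : ℕ):ℤ) * (z^i * (((i:ℤ)+1)^2-1)^j)
        = z^i * (((n.choose j : ℕ):ℤ) * (((i:ℤ)+1)^2-1)^j) := by ring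
    rw [e]
    exact Dvd.dvd.mul_left hct _
  have hA5 : (3:ℤ)^N ∣ (SA - ∑ j ∈ range 5, ((n.choose j : ℕ):ℤ) * th j) := by
    rw [hAexp]
    have hsub : ∑ j ∈ range (n+1), ((n.choose j : ℕ):ℤ) * th j
        = ∑ j ∈ range (max (n+1) 5), ((n.choose j : ℕ):ℤ) * th j := by
      refine Finset.sum_subset ?_ ?_
      · exact Finset.range_subset_range.mpr (le_max_left _ _)
      · intro j hj hnj
        simp only [Finset.mem_range] at hj hnj
        rw [Nat.choose_eq_zero_of_lt (by omega)]
        push_cast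
        ring
    rw [hsub]
    rw [Finset.range_eq_Ico, ← Finset.sum_Ico_consecutive _ (by omega : 0 ≤ 5)
      (by omega : 5 ≤ max (n+1) 5)]
    rw [← Finset.range_eq_Ico]
    have e : ∑ j ∈ range 5, ((n.choose j : ℕ):ℤ) * th j
        + ∑ j ∈ Ico 5 (max (n+1) 5), ((n.choose j : ℕ):ℤ) * th j
        - ∑ j ∈ range 5, ((n.choose j : ℕ):ℤ) * th j
        = ∑ j ∈ Ico 5 (max (n+1) 5), ((n.choose j : ℕ):ℤ) * th j := by ring
    rw [e]
    refine Finset.dvd_sum ?_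
    intro j hj
    simp only [Finset.mem_Ico] at hj
    exact htail j hj.1
  have hrange5 : ∑ j ∈ range 5, ((n.choose j : ℕ):ℤ) * th j
      = th 0 + (n:ℤ)*th 1 + ((n.choose 2 : ℕ):ℤ)*th 2 + ((n.choose 3 : ℕ):ℤ)*th 3
        + ((n.choose 4 : ℕ):ℤ)*th 4 := by
    rw [Finset.sum_range_succ, Finset.sum_range_succ, Finset.sum_range_succ,
      Finset.sum_range_succ, Finset.sum_range_succ, Finset.sum_range_zero,
      Nat.choose_zero_right, Nat.choose_one_right]
    push_cast
    ring
  -- i ≥ 4 facts about A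
  have hmemA : ∀ i, i ∈ A ↔ (i < 3*N ∧ ¬ (3 ∣ (i+1))) := by
    intro i
    rw [hA]
    simp only [Finset.mem_filter, Finset.mem_range]
  have hN5' : 5 ≤ N := by omega
  have h1A : 1 ∈ A := by rw [hmemA]; omega
  have h3A : 3 ∈ A := by rw [hmemA]; omega
  -- generic term divisibility for i ≥ k
  have hterm : ∀ i ∈ A, ∀ j k : ℕ, k ≤ i → (3:ℤ)^(k+j) ∣ z^i * (((i:ℤ)+1)^2-1)^j := by
    intro i hi j k hk
    rw [hmemA] at hi
    have h3x : (3:ℤ) ∣ (((i:ℤ)+1)^2-1) := by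
      have := tri (i+1) hi.2
      push_cast at this
      exact this
    have h1 : (3:ℤ)^k ∣ z^i := by
      calc (3:ℤ)^k ∣ z^k := pow_dvd_pow_of_dvd hz3 k
        _ ∣ z^i := pow_dvd_pow z hk
    have h2 : (3:ℤ)^j ∣ (((i:ℤ)+1)^2-1)^j := pow_dvd_pow_of_dvd h3x j
    rw [pow_add]
    exact mul_dvd_mul h1 h2
  have hzeroA : ∀ (j : ℕ), 1 ≤ j → z^(0:ℕ) * ((((0:ℕ):ℤ)+1)^2-1)^j = 0 := by
    intro j hj
    have e : ((((0:ℕ):ℤ)+1)^2-1) = 0 := by norm_num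
    rw [e, zero_pow (by omega : j ≠ 0)]
    ring
  -- Theta1 estimate
  have hTh1e : (3:ℤ)^5 ∣ (th 1 - (3*z + 15*z^3)) := by
    have e1 : th 1 = z^(1:ℕ) * ((((1:ℕ):ℤ)+1)^2-1)^1
        + ∑ i ∈ A.erase 1, z^i * (((i:ℤ)+1)^2-1)^1 := by
      rw [hth]
      simp only []
      exact (Finset.add_sum_erase A _ h1A).symm
    have h3A' : 3 ∈ A.erase 1 := Finset.mem_erase.mpr ⟨by norm_num, h3A⟩
    have e2 : ∑ i ∈ A.erase 1, z^i * (((i:ℤ)+1)^2-1)^1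
        = z^(3:ℕ) * ((((3:ℕ):ℤ)+1)^2-1)^1
          + ∑ i ∈ (A.erase 1).erase 3, z^i * (((i:ℤ)+1)^2-1)^1 := by
      exact (Finset.add_sum_erase _ _ h3A').symm
    rw [e1, e2]
    have e3 : z^(1:ℕ) * ((((1:ℕ):ℤ)+1)^2-1)^1 = 3*z := by push_cast; ring
    have e4 : z^(3:ℕ) * ((((3:ℕ):ℤ)+1)^2-1)^1 = 15*z^3 := by push_cast; ring
    rw [e3, e4]
    have e5 : 3*z + (15*z^3 + ∑ i ∈ (A.erase 1).erase 3, z^i * (((i:ℤ)+1)^2-1)^1)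
        - (3*z + 15*z^3) = ∑ i ∈ (A.erase 1).erase 3, z^i * (((i:ℤ)+1)^2-1)^1 := by ring
    rw [e5]
    refine Finset.dvd_sum ?_
    intro i hi
    have hi1 : i ≠ 3 := (Finset.mem_erase.mp hi).1
    have hi2 : i ≠ 1 := (Finset.mem_erase.mp (Finset.mem_erase.mp hi).2).1
    have hiA : i ∈ A := (Finset.mem_erase.mp (Finset.mem_erase.mp hi).2).2
    rcases Nat.eq_zero_or_pos i with h0 | hpos
    · subst h0
      rw [hzeroA 1 (by omega)]
      exact dvd_zero _
    · have hi4 : 4 ≤ i := by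
        rw [hmemA] at hiA
        rcases Nat.lt_or_ge i 4 with h | h
        · interval_cases i <;> omega
        · exact h
      exact hterm i hiA 1 4 hi4
  -- Theta2 estimate
  have hTh2e : (3:ℤ)^5 ∣ (th 2 - 9*z) := by
    have e1 : th 2 = z^(1:ℕ) * ((((1:ℕ):ℤ)+1)^2-1)^2
        + ∑ i ∈ A.erase 1, z^i * (((i:ℤ)+1)^2-1)^2 := by
      rw [hth]
      simp only []
      exact (Finset.add_sum_erase A _ h1A).symm
    rw [e1]
    have e3 : z^(1:ℕ) * ((((1:ℕ):ℤ)+1)^2-1)^2 = 9*z := by push_cast; ring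
    rw [e3]
    have e5 : 9*z + (∑ i ∈ A.erase 1, z^i * (((i:ℤ)+1)^2-1)^2) - 9*z
        = ∑ i ∈ A.erase 1, z^i * (((i:ℤ)+1)^2-1)^2 := by ring
    rw [e5]
    refine Finset.dvd_sum ?_
    intro i hi
    have hi2 : i ≠ 1 := (Finset.mem_erase.mp hi).1
    have hiA : i ∈ A := (Finset.mem_erase.mp hi).2
    rcases Nat.eq_zero_or_pos i with h0 | hpos
    · subst h0
      rw [hzeroA 2 (by omega)]
      exact dvd_zero _
    · have hi3 : 3 ≤ i := by
        rw [hmemA] at hiA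
        rcases Nat.lt_or_ge i 3 with h | h
        · interval_cases i <;> omega
        · exact h
      exact hterm i hiA 2 3 hi3
  -- Theta3 estimate
  have hTh3e : (3:ℤ)^6 ∣ (th 3 - 27*z) := by
    have e1 : th 3 = z^(1:ℕ) * ((((1:ℕ):ℤ)+1)^2-1)^3
        + ∑ i ∈ A.erase 1, z^i * (((i:ℤ)+1)^2-1)^3 := by
      rw [hth]
      simp only []
      exact (Finset.add_sum_erase A _ h1A).symm
    rw [e1]
    have e3 : z^(1:ℕ) * ((((1:ℕ):ℤ)+1)^2-1)^3 = 27*z := by push_cast; ring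
    rw [e3]
    have e5 : 27*z + (∑ i ∈ A.erase 1, z^i * (((i:ℤ)+1)^2-1)^3) - 27*z
        = ∑ i ∈ A.erase 1, z^i * (((i:ℤ)+1)^2-1)^3 := by ring
    rw [e5]
    refine Finset.dvd_sum ?_
    intro i hi
    have hi2 : i ≠ 1 := (Finset.mem_erase.mp hi).1
    have hiA : i ∈ A := (Finset.mem_erase.mp hi).2
    rcases Nat.eq_zero_or_pos i with h0 | hpos
    · subst h0
      rw [hzeroA 3 (by omega)]
      exact dvd_zero _
    · have hi3 : 3 ≤ i := by
        rw [hmemA] at hiA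
        rcases Nat.lt_or_ge i 3 with h | h
        · interval_cases i <;> omega
        · exact h
      exact hterm i hiA 3 3 hi3
  -- Theta4 estimate
  have hTh4e : (3:ℤ)^5 ∣ th 4 := by
    rw [hth]
    simp only []
    refine Finset.dvd_sum ?_
    intro i hi
    rcases Nat.eq_zero_or_pos i with h0 | hpos
    · subst h0
      rw [hzeroA 4 (by omega)]
      exact dvd_zero _
    · exact hterm i hi 4 1 hpos
  -- P0
  have hth0 : th 0 = (1+z) * ∑ s ∈ range N, (z^3)^s := by
    rw [hth]
    simp only []
    have e : ∀ i ∈ A, z^i * (((i:ℤ)+1)^2-1)^0 = z^i := by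
      intro i _
      rw [pow_zero, mul_one]
    rw [Finset.sum_congr rfl e, hA]
    exact theta0_eq z N
  have hgeom : (∑ s ∈ range N, (z^3)^s) * (z^3-1) = (z^3)^N - 1 := geom_sum_mul (z^3) N
  have hzN : (3:ℤ)^N ∣ (z^3)^N := by
    refine pow_dvd_pow_of_dvd ?_ N
    exact dvd_trans hz3 (dvd_pow_self z (by norm_num))
  have hP0 : (3:ℤ)^N ∣ ((3*a-2) * (2*z*(1-z)*th 0) - 2*a*(1+z)) := by
    have hkey0 : (3*a-2) * (2*z*(1-z)*th 0) - 2*a*(1+z)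
        = -(2*(1-z)*(1+z)*(∑ s ∈ range N, (z^3)^s)) * (a*z^2 - 2*(a-1)*z + a)
          - 2*a*(1+z)*((z^3)^N) := by
      linear_combination ((3*a-2)*(2*z*(1-z)))*hth0 - (2*a*(1+z))*hgeom
    rw [hkey0]
    refine dvd_sub ?_ ?_
    · exact Dvd.dvd.mul_left hQ _
    · exact Dvd.dvd.mul_left hzN _
  -- E identities
  have hE1 : (3:ℤ)^5 ∣ ((3*a-2) * (2*z*(1-z)*th 1 - 15*a^2*(1+z))) := by
    obtain ⟨u1, hu1⟩ := dId1 c w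
    rw [← hzc] at hu1
    have hiden : 2*z*(1-z)*th 1 - 15*a^2*(1+z)
        = 2*z*(1-z)*(th 1 - (3*z+15*z^3)) + (6*z^2-6*z^3-135*c^2-135*c^2*z)
          + (30*z^4-30*z^5) := by
      rw [ha]; ring
    rw [hiden, hu1]
    have h30 : (3:ℤ)^5 ∣ (30*z^4-30*z^5) := by
      have e5 : (3:ℤ)^5 = 243 := by norm_num
      rw [e5, hzc]
      exact ⟨10*c^4*(Yp c + 729*w)^4 - 30*c^5*(Yp c + 729*w)^5, by ring⟩
    refine Dvd.dvd.mul_left (dvd_add (dvd_add ?_ ?_) h30) _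
    · exact Dvd.dvd.mul_left hTh1e _
    · exact Dvd.dvd.mul_right (by norm_num : (3:ℤ)^5 ∣ 243) u1
  have hE2 : (3:ℤ)^5 ∣ ((3*a-2) * (2*z*(1-z)*th 2 - 72*a^2*(1+z))) := by
    obtain ⟨u2, hu2⟩ := dId2 c w
    rw [← hzc] at hu2
    have hiden : 2*z*(1-z)*th 2 - 72*a^2*(1+z)
        = 2*z*(1-z)*(th 2 - 9*z) + (18*z^2-18*z^3-648*c^2-648*c^2*z) := by
      rw [ha]; ring
    rw [hiden, hu2]
    refine Dvd.dvd.mul_left (dvd_add ?_ ?_) _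
    · exact Dvd.dvd.mul_left hTh2e _
    · exact Dvd.dvd.mul_right (by norm_num : (3:ℤ)^5 ∣ 243) u2
  have hE3 : (3:ℤ)^6 ∣ ((3*a-2) * (2*z*(1-z)*th 3 - 54*a^2*(1+z))) := by
    obtain ⟨u3, hu3⟩ := dId3 c w
    rw [← hzc] at hu3
    have hiden : 2*z*(1-z)*th 3 - 54*a^2*(1+z)
        = 2*z*(1-z)*(th 3 - 27*z) + (54*z^2-54*z^3-486*c^2-486*c^2*z) := by
      rw [ha]; ring
    rw [hiden, hu3]
    refine Dvd.dvd.mul_left (dvd_add ?_ ?_) _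
    · exact Dvd.dvd.mul_left hTh3e _
    · exact Dvd.dvd.mul_right (by norm_num : (3:ℤ)^6 ∣ 729) u3
  have hE4 : (3:ℤ)^5 ∣ ((3*a-2) * (2*z*(1-z)*th 4)) := by
    exact Dvd.dvd.mul_left (Dvd.dvd.mul_left hTh4e _) _
  -- combine with valuations of n and binomials
  have hcop2 : IsCoprime ((3:ℤ)^N) 2 := by
    refine IsCoprime.pow_left ?_
    rw [Int.isCoprime_iff_gcd_eq_one]
    decide
  have hcop8 : IsCoprime ((3:ℤ)^N) 8 := by
    have h : IsCoprime ((3:ℤ)^N) (2^3) := by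
      refine IsCoprime.pow ?_
      rw [Int.isCoprime_iff_gcd_eq_one]
      decide
    have e : (2:ℤ)^3 = 8 := by norm_num
    rw [e] at h
    exact h
  have hT1 : (3:ℤ)^N ∣ (n:ℤ) * ((3*a-2) * (2*z*(1-z)*th 1 - 15*a^2*(1+z))) := by
    rw [hN5, pow_add]
    exact mul_dvd_mul hvn hE1
  have hT2 : (3:ℤ)^N ∣ ((n.choose 2 : ℕ):ℤ) * ((3*a-2) * (2*z*(1-z)*th 2 - 72*a^2*(1+z))) := by
    refine hcop2.dvd_of_dvd_mul_right ?_
    have e : ((n.choose 2 : ℕ):ℤ) * ((3*a-2) * (2*z*(1-z)*th 2 - 72*a^2*(1+z))) * 2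
        = (n:ℤ) * (((n:ℤ)-1) * ((3*a-2) * (2*z*(1-z)*th 2 - 72*a^2*(1+z)))) := by
      linear_combination ((3*a-2) * (2*z*(1-z)*th 2 - 72*a^2*(1+z)))*chooseI2 n
    rw [e, hN5, pow_add]
    exact mul_dvd_mul hvn (Dvd.dvd.mul_left hE2 _)
  have hT3 : (3:ℤ)^N ∣ ((n.choose 3 : ℕ):ℤ) * ((3*a-2) * (2*z*(1-z)*th 3 - 54*a^2*(1+z))) := by
    refine hcop2.dvd_of_dvd_mul_right ?_
    have h6 : (3:ℤ) * (3:ℤ)^N ∣ (3:ℤ) * (((n.choose 3 : ℕ):ℤ) * ((3*a-2) * (2*z*(1-z)*th 3 - 54*a^2*(1+z))) * 2) := by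
      have e : (3:ℤ) * (((n.choose 3 : ℕ):ℤ) * ((3*a-2) * (2*z*(1-z)*th 3 - 54*a^2*(1+z))) * 2)
          = (n:ℤ) * ((((n:ℤ)-1) * (((n:ℤ)-2))) * ((3*a-2) * (2*z*(1-z)*th 3 - 54*a^2*(1+z)))) := by
        linear_combination ((3*a-2) * (2*z*(1-z)*th 3 - 54*a^2*(1+z)))*chooseI3 n
      rw [e]
      have e2 : (3:ℤ) * (3:ℤ)^N = (3:ℤ)^(v+6) := by
        rw [hN5]
        ring
      rw [e2, pow_add]
      exact mul_dvd_mul hvn (Dvd.dvd.mul_left hE3 _)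
    exact (mul_dvd_mul_iff_left (by norm_num : (3:ℤ) ≠ 0)).mp h6
  have htrip : (3:ℤ) ∣ ((n:ℤ)-1)*((n:ℤ)-2)*((n:ℤ)-3) := by
    have hm : (n:ℤ) % 3 = 0 ∨ (n:ℤ) % 3 = 1 ∨ (n:ℤ) % 3 = 2 := by omega
    rcases hm with hm | hm | hm
    · have h : (3:ℤ) ∣ ((n:ℤ)-3) := by omega
      exact Dvd.dvd.mul_left h _
    · have h : (3:ℤ) ∣ ((n:ℤ)-1) := by omega
      exact Dvd.dvd.mul_right (Dvd.dvd.mul_right h _) _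
    · have h : (3:ℤ) ∣ ((n:ℤ)-2) := by omega
      exact Dvd.dvd.mul_right (Dvd.dvd.mul_left h _) _
  have hT4 : (3:ℤ)^N ∣ ((n.choose 4 : ℕ):ℤ) * ((3*a-2) * (2*z*(1-z)*th 4)) := by
    refine hcop8.dvd_of_dvd_mul_right ?_
    have h6 : (3:ℤ) * (3:ℤ)^N ∣ (3:ℤ) * (((n.choose 4 : ℕ):ℤ) * ((3*a-2) * (2*z*(1-z)*th 4)) * 8) := by
      have e : (3:ℤ) * (((n.choose 4 : ℕ):ℤ) * ((3*a-2) * (2*z*(1-z)*th 4)) * 8)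
          = ((n:ℤ) * (((n:ℤ)-1)*((n:ℤ)-2)*((n:ℤ)-3))) * ((3*a-2) * (2*z*(1-z)*th 4)) := by
        linear_combination ((3*a-2) * (2*z*(1-z)*th 4))*chooseI4 n
      rw [e]
      have e2 : (3:ℤ) * (3:ℤ)^N = (3:ℤ)^(v+1) * (3:ℤ)^5 := by
        rw [hN5, ← pow_add, show v+1+5 = (v+5)+1 from by omega, pow_succ]
        ring
      rw [e2]
      refine mul_dvd_mul ?_ hE4
      rw [pow_add, pow_one]
      exact mul_dvd_mul hvn htrip
    exact (mul_dvd_mul_iff_left (by norm_num : (3:ℤ) ≠ 0)).mp h6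
  -- final assembly
  have keyD : (3*a-2) * (2*(1-z)*z*Tz z (3*N) n)
      - (1+z)*(2*a + (3*a-2)*(9*a^2*(n:ℤ)^3 + 9*a^2*(n:ℤ)^2 - 3*a^2*(n:ℤ)))
      = (3*a-2)*(2*(1-z)*z)*SB
        + (3*a-2)*(2*(1-z)*z)*(SA - (th 0 + (n:ℤ)*th 1 + ((n.choose 2 : ℕ):ℤ)*th 2
            + ((n.choose 3 : ℕ):ℤ)*th 3 + ((n.choose 4 : ℕ):ℤ)*th 4))
        + ((3*a-2) * (2*z*(1-z)*th 0) - 2*a*(1+z))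
        + (n:ℤ) * ((3*a-2) * (2*z*(1-z)*th 1 - 15*a^2*(1+z)))
        + ((n.choose 2 : ℕ):ℤ) * ((3*a-2) * (2*z*(1-z)*th 2 - 72*a^2*(1+z)))
        + ((n.choose 3 : ℕ):ℤ) * ((3*a-2) * (2*z*(1-z)*th 3 - 54*a^2*(1+z)))
        + ((n.choose 4 : ℕ):ℤ) * ((3*a-2) * (2*z*(1-z)*th 4)) := by
    linear_combination ((3*a-2)*(2*(1-z)*z))*hTsplit
      + ((1+z)*(3*a-2)*36*a^2)*chooseI2 n + ((1+z)*(3*a-2)*9*a^2)*chooseI3 n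
  have hfive : (3:ℤ)^N ∣ (SA - ∑ j ∈ range 5, ((n.choose j : ℕ):ℤ) * th j) := hA5
  rw [hrange5] at hfive
  rw [keyD]
  refine dvd_add (dvd_add (dvd_add (dvd_add (dvd_add (dvd_add ?_ ?_) ?_) ?_) ?_) ?_) ?_
  · exact Dvd.dvd.mul_left hB0 _
  · exact Dvd.dvd.mul_left hfive _
  · exact hP0
  · exact hT1
  · exact hT2
  · exact hT3
  · exact hT4

lemma EZ0 (a : ℤ) : EZ a 0 = 1 := by rw [EZ]

lemma EZ2 (a : ℤ) : EZ a 2 = -a := by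
  have h := EZ_even a 1 (by norm_num)
  rw [show Finset.Icc 1 1 = {1} from rfl, Finset.sum_singleton] at h
  norm_num [EZ0] at h
  exact h

lemma EZ4 (a : ℤ) : EZ a 4 = 6*a^2 - a := by
  have h := EZ_even a 2 (by norm_num)
  rw [show Finset.Icc 1 2 = {1, 2} from rfl, Finset.sum_insert (by norm_num),
    Finset.sum_singleton] at h
  have h2 : EZ a (2*2 - 2*1) = -a := EZ2 a
  norm_num [EZ0, h2] at h
  rw [h]
  have hc : (4:ℕ).choose 2 = 6 := rfl
  rw [hc]
  push_cast
  ring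

theorem stmt18 (a : ℤ) (ha : a ≠ 0) (h3 : (3 : ℤ) ∣ a) (n : ℕ) (hn : 2 ≤ n) :
    ∀ b : ℤ, (3 * a - 2) * b ≡ 1 [ZMOD (3 : ℤ) ^ (padicValNat 3 n + 5)] →
      EZ a (2 * n) ≡ 2 * a * b + 9 * a ^ 2 * n ^ 3 + 9 * a ^ 2 * n ^ 2 - 3 * a ^ 2 * n
        [ZMOD (3 : ℤ) ^ (padicValNat 3 n + 5)] := by
  intro b hb
  obtain ⟨c, hc⟩ := h3
  set N : ℕ := padicValNat 3 n + 5 with hNd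
  have hb' : (3:ℤ)^N ∣ 1 - (3*a-2)*b := Int.ModEq.dvd hb
  have hcancelS : ∀ X : ℤ, (3:ℤ)^N ∣ (3*a-2)*X → (3:ℤ)^N ∣ X := by
    intro X hX
    have e : X = b*((3*a-2)*X) + X*(1 - (3*a-2)*b) := by ring
    rw [e]
    exact dvd_add (Dvd.dvd.mul_left hX b) (Dvd.dvd.mul_left hb' X)
  have hgoal : EZ a (2*n) ≡ 2*a*b + 9*a^2*(n:ℤ)^3 + 9*a^2*(n:ℤ)^2 - 3*a^2*(n:ℤ) [ZMOD (3:ℤ)^N] := by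
    rcases Nat.lt_or_ge n 3 with hn2 | hn3
    · -- n = 2
      have hn2' : n = 2 := by omega
      subst hn2'
      have hp2 : padicValNat 3 2 = 0 := padicValNat.eq_zero_of_not_dvd (by norm_num)
      have hN5 : N = 5 := by rw [hNd, hp2]
      have hE : EZ a (2*2) = 6*a^2 - a := EZ4 a
      have hkey : (3:ℤ)^N ∣ (3*a-2)*(EZ a (2*2)
          - (2*a*b + 9*a^2*((2:ℕ):ℤ)^3 + 9*a^2*((2:ℕ):ℤ)^2 - 3*a^2*((2:ℕ):ℤ))) := by
        have e : (3*a-2)*(EZ a (2*2)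
            - (2*a*b + 9*a^2*((2:ℕ):ℤ)^3 + 9*a^2*((2:ℕ):ℤ)^2 - 3*a^2*((2:ℕ):ℤ)))
            = 243*(7*c^2 - 32*c^3) + 2*a*(1 - (3*a-2)*b) := by
          rw [hE, hc]
          push_cast
          ring
        rw [e]
        refine dvd_add ?_ (Dvd.dvd.mul_left hb' _)
        have h243 : (3:ℤ)^N = 243 := by rw [hN5]; norm_num
        rw [h243]
        exact Dvd.dvd.mul_right dvd_rfl _
      have hD := hcancelS _ hkey
      exact Int.ModEq.symm (Int.modEq_iff_dvd.mpr hD)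
    · -- main case
      have hn1 : 1 ≤ n := by omega
      obtain ⟨y, w, hy, hq6'⟩ := hensel c N
      have hq6 : (3:ℤ)^N ∣ (9*c^2*y^2 - 2*(3*c-1)*y + 1) :=
        dvd_trans (pow_dvd_pow 3 (by omega)) hq6'
      set z : ℤ := a*y with hzd
      have hz3 : (3:ℤ) ∣ z := ⟨c*y, by rw [hzd, hc]; ring⟩
      have hQ : (3:ℤ)^N ∣ (a*z^2 - 2*(a-1)*z + a) := by
        have he : a*z^2 - 2*(a-1)*z + a = a*(9*c^2*y^2 - 2*(3*c-1)*y + 1) := by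
          rw [hzd, hc]; ring
        rw [he]
        exact Dvd.dvd.mul_left hq6 a
      have h1 := lemA a z N (by omega) hz3 hQ n hn1
      have h2 := lemB a c y w z n N hc hy hzd hn3 hNd hq6
      have hkey : (3:ℤ)^N ∣ (3*a-2)*((1+z) * (EZ a (2*n)
          - (2*a*b + 9*a^2*(n:ℤ)^3 + 9*a^2*(n:ℤ)^2 - 3*a^2*(n:ℤ)))) := by
        have e : (3*a-2)*((1+z) * (EZ a (2*n)
            - (2*a*b + 9*a^2*(n:ℤ)^3 + 9*a^2*(n:ℤ)^2 - 3*a^2*(n:ℤ))))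
          = (3*a-2)*((1+z) * EZ a (2*n) - 2*(1-z)*z*Tz z (3*N) n)
            + ((3*a-2) * (2*(1-z)*z*Tz z (3*N) n)
              - (1+z)*(2*a + (3*a-2)*(9*a^2*(n:ℤ)^3 + 9*a^2*(n:ℤ)^2 - 3*a^2*(n:ℤ))))
            + (1+z)*(2*a)*(1 - (3*a-2)*b) := by ring
        rw [e]
        exact dvd_add (dvd_add (Dvd.dvd.mul_left h1 _) h2) (Dvd.dvd.mul_left hb' _)
      have hzz := hcancelS _ hkey
      have hcopz : IsCoprime ((3:ℤ)^N) (1+z) := by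
        obtain ⟨k, hk⟩ := hz3
        refine IsCoprime.pow_left ?_
        exact ⟨-k, 1, by rw [hk]; ring⟩
      have hD : (3:ℤ)^N ∣ (EZ a (2*n)
          - (2*a*b + 9*a^2*(n:ℤ)^3 + 9*a^2*(n:ℤ)^2 - 3*a^2*(n:ℤ))) :=
        hcopz.dvd_of_dvd_mul_left hzz
      exact Int.ModEq.symm (Int.modEq_iff_dvd.mpr hD)
  have e : (2*a*b + 9*a^2*(n:ℤ)^3 + 9*a^2*(n:ℤ)^2 - 3*a^2*(n:ℤ))
      = 2 * a * b + 9 * a ^ 2 * (n:ℤ) ^ 3 + 9 * a ^ 2 * (n:ℤ) ^ 2 - 3 * a ^ 2 * (n:ℤ) := by ring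
  rw [e] at hgoal
  exact hgoal
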